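/- Let F be a connected finite simple graph with at least two vertices, and let F' be the graph with vertex set V(F) × {0,1} in which (u,a) and (v,b) are adjacent if and only if u and v are adjacent in F (so each vertex of F is duplicated by a non-adjacent false twin). Then F' has no clique cut-set, i.e., F' is an atom. -/

import Mathlib

open SimpleGraph

/-- The graph `2P₂`: two disjoint edges, on vertex set `Fin 4`. -/
def twoP2 : SimpleGraph (Fin 4) :=
  SimpleGraph.fromRel (fun a b => (a = 0 ∧ b = 1) ∨ (a = 2 ∧ b = 3))

/-- The graph `P₂ + P₃`: disjoint union of a path on 2 vertices (0-1)
and a path on 3 vertices (2-3-4), on vertex set `Fin 5`. -/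
def P2P3 : SimpleGraph (Fin 5) :=
  SimpleGraph.fromRel (fun a b => (a = 0 ∧ b = 1) ∨ (a = 2 ∧ b = 3) ∨ (a = 3 ∧ b = 4))

/-- `G` is `H`-free: `G` contains no induced subgraph isomorphic to `H`. -/
def Free {W V : Type*} (H : SimpleGraph W) (G : SimpleGraph V) : Prop :=
  IsEmpty (H ↪g G)

/-- `G` has no clique cut-set: for every clique `K`, deleting the vertices of `K`
does not disconnect the graph.  A graph with this property is called an atom. -/
def NoCliqueCutset {V : Type*} (G : SimpleGraph V) : Prop :=
  ∀ K : Set V, G.IsClique K → (G.induce (Kᶜ : Set V)).Preconnected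

/-- If `F` is a connected graph on at least two vertices, then the graph `F'` obtained by
duplicating every vertex by a (non-adjacent) false twin — i.e. the graph on `V × Bool` with
`(u,a)` adjacent to `(v,b)` iff `u` is adjacent to `v` in `F` — has no clique cut-set. -/
theorem falseTwinDuplication_is_atom {V : Type*} [Fintype V] [Nontrivial V]
    (F : SimpleGraph V) (hconn : F.Connected) :
    NoCliqueCutset (SimpleGraph.comap (Prod.fst : V × Bool → V) F) := by
  intro K hK
  set G := SimpleGraph.comap (Prod.fst : V × Bool → V) F with hG
  have hfree : ∀ w : V, ∃ c : Bool, (w, c) ∈ (Kᶜ : Set (V × Bool)) := by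
    intro w
    by_contra h
    push_neg at h
    have h0 : (w, false) ∈ K := by simpa using h false
    have h1 : (w, true) ∈ K := by simpa using h true
    have hadj := hK h0 h1 (by simp)
    have : F.Adj w w := hadj
    exact F.loopless.irrefl w this
  have hnbr : ∀ u : V, ∃ w, F.Adj u w := by
    intro u
    obtain ⟨v', hv'⟩ := exists_ne u
    obtain ⟨p⟩ := hconn.preconnected u v'
    cases p with
    | nil => exact absurd rfl hv'
    | cons h _ => exact ⟨_, h⟩
  have main : ∀ {u v : V} (p : F.Walk u v) (a b : Bool) (hu : (u, a) ∈ (Kᶜ : Set (V × Bool)))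
      (hv : (v, b) ∈ (Kᶜ : Set (V × Bool))),
      (G.induce (Kᶜ : Set (V × Bool))).Reachable ⟨(u, a), hu⟩ ⟨(v, b), hv⟩ := by
    intro u0 v0 p
    induction p with
    | @nil u =>
      intro a b hu hv
      by_cases hab : a = b
      · subst hab; exact Reachable.refl _
      · obtain ⟨w, hw⟩ := hnbr u
        obtain ⟨c, hc⟩ := hfree w
        have s1 : (G.induce (Kᶜ : Set (V × Bool))).Adj ⟨(u, a), hu⟩ ⟨(w, c), hc⟩ := hw
        have s2 : (G.induce (Kᶜ : Set (V × Bool))).Adj ⟨(w, c), hc⟩ ⟨(u, b), hv⟩ := hw.symm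
        exact s1.reachable.trans s2.reachable
    | @cons u w v h p ih =>
      intro a b hu hv
      obtain ⟨c, hc⟩ := hfree w
      have s1 : (G.induce (Kᶜ : Set (V × Bool))).Adj ⟨(u, a), hu⟩ ⟨(w, c), hc⟩ := h
      exact s1.reachable.trans (ih c b hc hv)
  rintro ⟨⟨u, a⟩, hu⟩ ⟨⟨v, b⟩, hv⟩
  obtain ⟨p⟩ := hconn.preconnected u v
  exact main p a b hu hv
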